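/- If p is a real polynomial of degree n ≥ 2 with n real roots x_1 < x_2 < ... < x_n (all simple), then the minimal gap between consecutive roots of p' is at least the minimal gap between consecutive roots of p. (Riesz's theorem on growth of the minimum root gap under differentiation.) -/

import Mathlib

open Polynomial
open Polynomial

lemma inv_gt_of_lt_of_mul_pos {a b : ℝ} (hab : a < b) (h : 0 < a * b) : b⁻¹ < a⁻¹ := by
  rcases lt_or_gt_of_ne (fun h0 : a = 0 => by simp [h0] at h) with ha | ha
  · have hb : b < 0 := by nlinarith
    exact (inv_lt_inv_of_neg hb ha).mpr hab
  · exact inv_strictAnti₀ ha hab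

lemma sum_inv_eq {ι : Type*} [DecidableEq ι] (s : Finset ι) (x : ι → ℝ) (t : ℝ)
    (ht : ∀ k ∈ s, t ≠ x k) :
    eval t (derivative (∏ k ∈ s, (X - C (x k)))) =
      eval t (∏ k ∈ s, (X - C (x k))) * ∑ k ∈ s, (t - x k)⁻¹ := by
  induction s using Finset.induction_on with
  | empty => simp
  | @insert a s ha ih =>
    rw [Finset.prod_insert ha, Finset.sum_insert ha, derivative_mul]
    have hta : t - x a ≠ 0 := sub_ne_zero.mpr (ht a (Finset.mem_insert_self a s))
    have ih' := ih (fun k hk => ht k (Finset.mem_insert_of_mem hk))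
    simp only [eval_add, eval_mul, eval_sub, eval_X, eval_C, derivative_sub, derivative_X,
      derivative_C, sub_zero, eval_one, ih']
    field_simp
open Polynomial

lemma factorize (n : ℕ) (hn : 0 < n) (p : ℝ[X]) (hdeg : p.natDegree = n)
    (x : Fin n → ℝ) (hinj : Function.Injective x) (hroots : ∀ i, p.IsRoot (x i)) :
    p = C p.leadingCoeff * ∏ k, (X - C (x k)) := by
  have hp0 : p ≠ 0 := fun h => by simp [h] at hdeg; omega
  set M : Multiset ℝ := Multiset.map x Finset.univ.val with hM
  have hnodup : M.Nodup := Multiset.Nodup.map hinj Finset.univ.nodup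
  have hle : M ≤ p.roots := by
    rw [Multiset.le_iff_count]
    intro a
    by_cases haM : a ∈ M
    · have h1 : M.count a = 1 := (Multiset.count_eq_one_of_mem hnodup haM)
      rw [h1, Multiset.one_le_count_iff_mem]
      obtain ⟨k, _, rfl⟩ := Multiset.mem_map.mp haM
      exact (mem_roots hp0).mpr (hroots k)
    · simp [Multiset.count_eq_zero_of_notMem haM]
  have hcard : M.card = n := by simp [hM]
  have hcard2 : p.roots.card ≤ n := hdeg ▸ p.card_roots'
  have heq : p.roots = M := (Multiset.eq_of_le_of_card_le hle (by omega)).symm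
  have hsplits : p.Splits := (Polynomial.splits_iff_card_roots).mpr (by rw [heq, hcard, hdeg])
  have h2 := hsplits.eq_prod_roots
  have hprod : (Multiset.map (fun a => X - C a) M).prod = ∏ k, (X - C (x k)) := by
    rw [hM, Multiset.map_map]; rfl
  conv_lhs => rw [h2, heq, hprod]

lemma sum_zero_of_deriv (n : ℕ) (x : Fin n → ℝ) (c : ℝ) (hc : c ≠ 0) (t : ℝ)
    (ht : ∀ k, t ≠ x k)
    (hd : eval t (derivative (C c * ∏ k, (X - C (x k)))) = 0) :
    ∑ k, (t - x k)⁻¹ = 0 := by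
  rw [derivative_C_mul, eval_mul, eval_C,
    sum_inv_eq Finset.univ x t (fun k _ => ht k)] at hd
  have hp : eval t (∏ k, (X - C (x k))) ≠ 0 := by
    rw [eval_prod]
    exact Finset.prod_ne_zero_iff.mpr fun k _ => by
      simp only [eval_sub, eval_X, eval_C]; exact sub_ne_zero.mpr (ht k)
  rcases mul_eq_zero.mp hd with h | h
  · exact absurd h hc
  · rcases mul_eq_zero.mp h with h | h
    · exact absurd h hp
    · exact h

theorem riesz_min_gap (n : ℕ) (hn : 2 ≤ n) (p : ℝ[X]) (hdeg : p.natDegree = n)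
    (x : Fin n → ℝ) (hx : StrictMono x) (hroots : ∀ i, p.IsRoot (x i))
    (y : Fin (n - 1) → ℝ) (hy : StrictMono y)
    (hyroots : ∀ i, (Polynomial.derivative p).IsRoot (y i))
    (hinter : ∀ i : ℕ, ∀ hi : i < n - 1,
      x ⟨i, by omega⟩ < y ⟨i, hi⟩ ∧ y ⟨i, hi⟩ < x ⟨i + 1, by omega⟩) :
    ∀ i : ℕ, ∀ hi : i + 1 < n - 1,
      ∃ j : ℕ, ∃ hj : j + 1 < n,
        x ⟨j + 1, hj⟩ - x ⟨j, by omega⟩ ≤ y ⟨i + 1, hi⟩ - y ⟨i, by omega⟩ := by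
  obtain ⟨m, rfl⟩ : ∃ m, n = m + 2 := ⟨n - 2, by omega⟩
  intro i hi
  by_contra hcon
  push_neg at hcon
  have hi' : i + 1 < m + 1 := hi
  set c := p.leadingCoeff with hc
  have hp0 : p ≠ 0 := fun h => by simp [h] at hdeg
  have hc0 : c ≠ 0 := leadingCoeff_ne_zero.mpr hp0
  have hfac := factorize (m + 2) (by omega) p hdeg x hx.injective hroots
  set u := y ⟨i, by omega⟩ with hu
  set v := y ⟨i + 1, hi⟩ with hv
  -- positions
  have h1 := hinter i (by omega)
  have h2 := hinter (i + 1) (by omega)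
  have hxu1 : x ⟨i, by omega⟩ < u := h1.1
  have hxu2 : u < x ⟨i + 1, by omega⟩ := h1.2
  have hxv1 : x ⟨i + 1, by omega⟩ < v := h2.1
  have hxv2 : v < x ⟨i + 2, by omega⟩ := h2.2
  -- u,v avoid all roots
  have hneu : ∀ k : Fin (m + 2), u ≠ x k := by
    intro k
    rcases le_or_gt k.val i with hk | hk
    · have : x k ≤ x ⟨i, by omega⟩ := hx.monotone (by exact hk)
      exact fun h => absurd (h ▸ hxu1) (by linarith)
    · have : x ⟨i + 1, by omega⟩ ≤ x k := hx.monotone (by exact hk)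
      exact fun h => absurd (h ▸ hxu2) (by linarith)
  have hnev : ∀ k : Fin (m + 2), v ≠ x k := by
    intro k
    rcases le_or_gt k.val (i + 1) with hk | hk
    · have : x k ≤ x ⟨i + 1, by omega⟩ := hx.monotone (by exact hk)
      exact fun h => absurd (h ▸ hxv1) (by linarith)
    · have : x ⟨i + 2, by omega⟩ ≤ x k := hx.monotone (by exact hk)
      exact fun h => absurd (h ▸ hxv2) (by linarith)
  -- sums vanish
  have hSu : ∑ k, (u - x k)⁻¹ = 0 :=
    sum_zero_of_deriv (m + 2) x c hc0 u hneu (by rw [← hfac]; exact hyroots _)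
  have hSv : ∑ k, (v - x k)⁻¹ = 0 :=
    sum_zero_of_deriv (m + 2) x c hc0 v hnev (by rw [← hfac]; exact hyroots _)
  -- split sums
  rw [Fin.sum_univ_succ] at hSv
  rw [Fin.sum_univ_castSucc] at hSu
  -- termwise comparison
  have hterm : ∀ k : Fin (m + 1),
      (u - x k.castSucc)⁻¹ < (v - x k.succ)⁻¹ := by
    intro k
    have hgap := hcon k.val (by omega)
    have hxs : x ⟨k.val + 1, by omega⟩ = x k.succ := by congr 1
    have hxc : x ⟨k.val, by omega⟩ = x k.castSucc := by congr 1
    rw [hxs, hxc] at hgap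
    have hab : v - x k.succ < u - x k.castSucc := by linarith
    apply inv_gt_of_lt_of_mul_pos hab
    rcases le_or_gt k.val i with hk | hk
    · have ha : x k.succ ≤ x ⟨i + 1, by omega⟩ := hx.monotone (by exact Nat.succ_le_succ hk)
      have hb : x k.castSucc ≤ x ⟨i, by omega⟩ := hx.monotone (by exact hk)
      exact mul_pos (by linarith) (by linarith)
    · have ha : x ⟨i + 2, by omega⟩ ≤ x k.succ := hx.monotone (by exact Nat.succ_le_succ hk)
      have hb : x ⟨i + 1, by omega⟩ ≤ x k.castSucc := hx.monotone (by exact hk)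
      exact mul_pos_of_neg_of_neg (by linarith) (by linarith)
  have hsum : ∑ k : Fin (m + 1), (u - x k.castSucc)⁻¹ <
      ∑ k : Fin (m + 1), (v - x k.succ)⁻¹ :=
    Finset.sum_lt_sum_of_nonempty Finset.univ_nonempty fun k _ => hterm k
  -- boundary terms
  have hb1 : 0 < (v - x 0)⁻¹ := by
    have : x (0 : Fin (m + 2)) ≤ x ⟨i + 1, by omega⟩ := hx.monotone (by exact Nat.zero_le _)
    exact inv_pos.mpr (by linarith)
  have hb2 : (u - x (Fin.last (m + 1)))⁻¹ < 0 := by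
    have : x ⟨i + 1, by omega⟩ ≤ x (Fin.last (m + 1)) := hx.monotone (by
      show i + 1 ≤ m + 1; omega)
    exact inv_lt_zero.mpr (by linarith)
  linarith
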